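/- For every integer n ≥ 1, define h∗ : A_n → ℝ^p by h∗(g₁) = L g₁ − n(1 − √(max(1 − ‖g₁‖²/n², 0)))·ω₀, where A_n = {g₁ ∈ ℝ^{p−1} : ‖g₁‖ ≤ n} and B_n = {h₃ ∈ ℝ^p : ‖ω₀ + h₃/n‖ = 1 and ‖h₃‖ ≤ √2·n}. Then h∗ is continuous, maps A_n into B_n, and is a bijection from A_n onto B_n; its inverse is the continuous map h₃ ↦ L*(h₃) (the adjoint of L, i.e. the coordinate vector of the orthogonal projection of h₃ onto the orthogonal complement of ω₀), which is itself a bijection from B_n onto A_n. -/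

import Mathlib

open RealInnerProductSpace

set_option maxHeartbeats 1000000 in
theorem sphere_chart_bijection
    (p : ℕ) (hp : 2 ≤ p)
    (ω₀ : EuclideanSpace ℝ (Fin p)) (hω₀ : ‖ω₀‖ = 1)
    (L : EuclideanSpace ℝ (Fin (p - 1)) →ₗᵢ[ℝ] EuclideanSpace ℝ (Fin p))
    (hL : LinearMap.range L.toLinearMap = (ℝ ∙ ω₀)ᗮ)
    (n : ℕ) (hn : 1 ≤ n)
    (h : EuclideanSpace ℝ (Fin (p - 1)) → EuclideanSpace ℝ (Fin p))
    (hdef : ∀ g₁, h g₁ =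
      L g₁ - ((n : ℝ) * (1 - Real.sqrt (max (1 - ‖g₁‖ ^ 2 / (n : ℝ) ^ 2) 0))) • ω₀)
    (A : Set (EuclideanSpace ℝ (Fin (p - 1))))
    (hA : A = {g₁ | ‖g₁‖ ≤ (n : ℝ)})
    (B : Set (EuclideanSpace ℝ (Fin p)))
    (hB : B = {h₃ | ‖ω₀ + ((n : ℝ))⁻¹ • h₃‖ = 1 ∧ ‖h₃‖ ≤ Real.sqrt 2 * (n : ℝ)}) :
    ContinuousOn h A ∧
    Set.MapsTo h A B ∧
    Set.BijOn h A B ∧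
    Continuous (fun y => ContinuousLinearMap.adjoint L.toContinuousLinearMap y) ∧
    Set.BijOn (fun y => ContinuousLinearMap.adjoint L.toContinuousLinearMap y) B A ∧
    Set.InvOn (fun y => ContinuousLinearMap.adjoint L.toContinuousLinearMap y) h A B := by
  set T := ContinuousLinearMap.adjoint L.toContinuousLinearMap with hT
  have hnpos : (0:ℝ) < n := by exact_mod_cast hn
  have hne : ((n:ℝ)) ≠ 0 := ne_of_gt hnpos
  -- L x ∈ range, hence orthogonal to ω₀
  have hLmem : ∀ x, ⟪ω₀, L x⟫ = 0 := by
    intro x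
    have : (L x : EuclideanSpace ℝ (Fin p)) ∈ (ℝ ∙ ω₀)ᗮ := by
      rw [← hL]; exact ⟨x, rfl⟩
    exact Submodule.mem_orthogonal_singleton_iff_inner_right.mp this
  have hLc : ∀ x, L.toContinuousLinearMap x = L x := fun x => rfl
  -- T ∘ L = id
  have hTL : ∀ x, T (L x) = x := by
    intro x
    apply ext_inner_right ℝ
    intro v
    rw [hT, ContinuousLinearMap.adjoint_inner_left, hLc, L.inner_map_map]
  -- T ω₀ = 0
  have hTω : T ω₀ = 0 := by
    apply ext_inner_right ℝ
    intro v
    rw [hT, ContinuousLinearMap.adjoint_inner_left, hLc, inner_zero_left]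
    exact hLmem v
  -- decomposition
  have hdecomp : ∀ y : EuclideanSpace ℝ (Fin p), y = L (T y) + ⟪ω₀, y⟫ • ω₀ := by
    intro y
    have hz : y - ⟪ω₀, y⟫ • ω₀ ∈ (ℝ ∙ ω₀)ᗮ := by
      rw [Submodule.mem_orthogonal_singleton_iff_inner_right, inner_sub_right,
        inner_smul_right, real_inner_self_eq_norm_sq, hω₀]
      ring
    rw [← hL] at hz
    obtain ⟨x, hx⟩ := hz
    have hx' : L x = y - ⟪ω₀, y⟫ • ω₀ := hx
    have hxx : T y = x := by
      have := congrArg T hx'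
      rw [hTL] at this
      rw [this, map_sub, map_smul, hTω, smul_zero, sub_zero]
    rw [hxx, hx']
    abel
  -- pythagoras: ‖L g + a • ω₀‖² = ‖g‖² + a²
  have hpyth : ∀ (g : EuclideanSpace ℝ (Fin (p-1))) (a : ℝ),
      ‖L g + a • ω₀‖ ^ 2 = ‖g‖ ^ 2 + a ^ 2 := by
    intro g a
    rw [norm_add_sq_real, real_inner_smul_right, real_inner_comm ω₀ (L g), hLmem,
      norm_smul, L.norm_map, Real.norm_eq_abs, hω₀]
    simp [sq_abs]
  -- h maps A into B
  have hmaps : ∀ g ∈ A, ‖ω₀ + ((n:ℝ))⁻¹ • h g‖ = 1 ∧ ‖h g‖ ≤ Real.sqrt 2 * (n:ℝ) := by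
    intro g hg
    rw [hA] at hg
    have hg' : ‖g‖ ≤ (n:ℝ) := hg
    have ht : (0:ℝ) ≤ 1 - ‖g‖ ^ 2 / (n:ℝ) ^ 2 := by
      rw [sub_nonneg, div_le_one (by positivity)]
      exact pow_le_pow_left₀ (norm_nonneg g) hg' 2
    set s := Real.sqrt (max (1 - ‖g‖ ^ 2 / (n:ℝ) ^ 2) 0) with hs
    have hmax : max (1 - ‖g‖ ^ 2 / (n:ℝ) ^ 2) 0 = 1 - ‖g‖ ^ 2 / (n:ℝ) ^ 2 :=
      max_eq_left ht
    have hs0 : 0 ≤ s := Real.sqrt_nonneg _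
    have hs2 : s ^ 2 = 1 - ‖g‖ ^ 2 / (n:ℝ) ^ 2 := by
      rw [hs, hmax, Real.sq_sqrt ht]
    have htn : (0:ℝ) ≤ ‖g‖ ^ 2 / (n:ℝ) ^ 2 := by positivity
    have hs1 : s ≤ 1 := by nlinarith
    have hform : h g = L g + (-((n:ℝ) * (1 - s))) • ω₀ := by
      rw [hdef, neg_smul, sub_eq_add_neg]
    constructor
    · have hvec : ω₀ + ((n:ℝ))⁻¹ • h g = L (((n:ℝ))⁻¹ • g) + s • ω₀ := by
        rw [hform, map_smul]
        match_scalars <;> first | ring1 | linear_combination (s - 1) * mul_inv_cancel₀ hne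
      have hnorm2 : ‖ω₀ + ((n:ℝ))⁻¹ • h g‖ ^ 2 = 1 := by
        rw [hvec, hpyth, norm_smul, Real.norm_eq_abs, abs_of_pos (by positivity),
          mul_pow, hs2]
        field_simp
        ring
      nlinarith [norm_nonneg (ω₀ + ((n:ℝ))⁻¹ • h g)]
    · have hnorm2 : ‖h g‖ ^ 2 = ‖g‖ ^ 2 + ((n:ℝ) * (1 - s)) ^ 2 := by
        rw [hform, hpyth, neg_pow]
        ring
      have hgs : ‖g‖ ^ 2 = (n:ℝ) ^ 2 * (1 - s ^ 2) := by
        rw [hs2]; field_simp [hne]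
        ring
      have hle : ‖h g‖ ^ 2 ≤ 2 * (n:ℝ) ^ 2 := by
        rw [hnorm2, hgs]
        nlinarith [mul_nonneg (sq_nonneg ((n:ℝ))) hs0]
      calc ‖h g‖ = Real.sqrt (‖h g‖ ^ 2) := (Real.sqrt_sq (norm_nonneg _)).symm
        _ ≤ Real.sqrt (2 * (n:ℝ) ^ 2) := Real.sqrt_le_sqrt hle
        _ = Real.sqrt 2 * (n:ℝ) := by
            rw [Real.sqrt_mul (by norm_num), Real.sqrt_sq (by positivity)]
  -- B side computations
  have hBside : ∀ y ∈ B, ‖T y‖ ≤ (n:ℝ) ∧ h (T y) = y := by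
    intro y hy
    rw [hB] at hy
    obtain ⟨hy1, hy2⟩ := hy
    set g := T y with hgdef
    set a := (⟪ω₀, y⟫ : ℝ) with hadef
    have hyd : y = L g + a • ω₀ := hdecomp y
    have hv : ω₀ + ((n:ℝ))⁻¹ • y = ((n:ℝ))⁻¹ • (L g + (((n:ℝ)) + a) • ω₀) := by
      rw [hyd]
      match_scalars <;> first | ring1 | linear_combination -mul_inv_cancel₀ hne
    have heqn : ‖L g + (((n:ℝ)) + a) • ω₀‖ = (n:ℝ) := by
      rw [hv, norm_smul, Real.norm_eq_abs, abs_of_pos (by positivity)] at hy1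
      field_simp [hne] at hy1
      exact hy1
    have heqp : ‖g‖ ^ 2 + ((n:ℝ) + a) ^ 2 = (n:ℝ) ^ 2 := by
      rw [← hpyth g ((n:ℝ) + a), heqn]
    have hy2' : ‖y‖ ^ 2 ≤ 2 * (n:ℝ) ^ 2 := by
      nlinarith [Real.sq_sqrt (by norm_num : (0:ℝ) ≤ 2), Real.sqrt_nonneg 2,
        norm_nonneg y]
    have hysq : ‖y‖ ^ 2 = ‖g‖ ^ 2 + a ^ 2 := by rw [hyd, hpyth]
    have hga : ‖g‖ ≤ (n:ℝ) := by nlinarith [norm_nonneg g]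
    have hana : (0:ℝ) ≤ (n:ℝ) + a := by nlinarith
    refine ⟨hga, ?_⟩
    have hn2 : ((n:ℝ)) ^ 2 ≠ 0 := pow_ne_zero 2 hne
    have hkey : 1 - ‖g‖ ^ 2 / (n:ℝ) ^ 2 = (((n:ℝ) + a) / (n:ℝ)) ^ 2 := by
      rw [div_pow, eq_div_iff hn2, sub_mul, one_mul, div_mul_cancel₀ _ hn2]
      linarith [heqp]
    have hmaxval : max (1 - ‖g‖ ^ 2 / (n:ℝ) ^ 2) 0 = (((n:ℝ) + a) / (n:ℝ)) ^ 2 := by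
      rw [hkey]
      exact max_eq_left (by positivity)
    have hsval : Real.sqrt (max (1 - ‖g‖ ^ 2 / (n:ℝ) ^ 2) 0) = ((n:ℝ) + a) / (n:ℝ) := by
      rw [hmaxval, Real.sqrt_sq (div_nonneg hana hnpos.le)]
    have hcoef : (n:ℝ) * (1 - ((n:ℝ) + a) / (n:ℝ)) = -a := by
      field_simp [hne]
      ring
    rw [hdef, hsval, hcoef, neg_smul, sub_neg_eq_add, ← hyd]
  -- continuity of h
  have hcont : Continuous h := by
    have : h = fun g₁ => L g₁ -
        ((n : ℝ) * (1 - Real.sqrt (max (1 - ‖g₁‖ ^ 2 / (n : ℝ) ^ 2) 0))) • ω₀ :=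
      funext hdef
    rw [this]
    fun_prop
  have hcontT : Continuous (fun y => T y) := T.continuous
  -- maps to
  have hMapsTo : Set.MapsTo h A B := by
    intro g hg
    rw [hB]
    exact hmaps g hg
  have hMapsTo' : Set.MapsTo (fun y => T y) B A := by
    intro y hy
    rw [hA]
    exact (hBside y hy).1
  -- InvOn
  have hInv : Set.InvOn (fun y => T y) h A B := by
    constructor
    · intro x hx
      simp only
      rw [hdef, map_sub, map_smul, hTL, hTω, smul_zero, sub_zero]
    · intro y hy
      simp only
      exact (hBside y hy).2
  exact ⟨hcont.continuousOn, hMapsTo, hInv.bijOn hMapsTo hMapsTo',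
    hcontT, hInv.symm.bijOn hMapsTo' hMapsTo, hInv⟩
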